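/- arXiv:2405.10178 — 2 statements merged into one kernel-verified Lean document; each statement's English description precedes it below -/
import Mathlib

section
/- For a > 0, b < 1 with a - b + 1 > 0, the function U(a,b,x) = (1/Γ(a)) ∫_0^∞ e^{-xt} t^{a-1}(1+t)^{b-a-1} dt tends to Γ(1-b)/Γ(a-b+1) as x → 0⁺. -/
open MeasureTheory Filter Topology

section AuxTricomi

lemma complex_eq_ofReal {s t : ℝ} {x : ℝ} (hx : x ∈ Set.Ioo (0:ℝ) 1) :
    (x : ℂ) ^ ((s:ℂ) - 1) * (1 - (x : ℂ)) ^ ((t:ℂ) - 1)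
      = ((x ^ (s - 1) * (1 - x) ^ (t - 1) : ℝ) : ℂ) := by
  rw [show ((s:ℂ) - 1) = ((s - 1 : ℝ) : ℂ) by push_cast; ring,
    show ((t:ℂ) - 1) = ((t - 1 : ℝ) : ℂ) by push_cast; ring,
    show (1 - (x:ℂ)) = (((1 - x : ℝ)) : ℂ) by push_cast; ring,
    ← Complex.ofReal_cpow hx.1.le, ← Complex.ofReal_cpow (by linarith [hx.2]),
    ← Complex.ofReal_mul]

lemma beta_integrable (s t : ℝ) (hs : 0 < s) (ht : 0 < t) :
    IntegrableOn (fun x : ℝ => x ^ (s - 1) * (1 - x) ^ (t - 1)) (Set.Ioo 0 1) := by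
  have h := (Complex.betaIntegral_convergent (u := (s:ℂ)) (v := (t:ℂ)) (by simpa) (by simpa))
  have h2 : IntegrableOn (fun x : ℝ => (x : ℂ) ^ ((s:ℂ) - 1) * (1 - (x : ℂ)) ^ ((t:ℂ) - 1))
      (Set.Ioo 0 1) := by
    have := (intervalIntegrable_iff_integrableOn_Ioc_of_le (by norm_num : (0:ℝ) ≤ 1)).mp h
    exact this.mono_set Set.Ioo_subset_Ioc_self
  have h3 : IntegrableOn (fun x : ℝ => Complex.re ((x : ℂ) ^ ((s:ℂ) - 1) * (1 - (x : ℂ)) ^ ((t:ℂ) - 1))) (Set.Ioo 0 1) := h2.re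
  refine MeasureTheory.IntegrableOn.congr_fun h3 (fun x hx => ?_) measurableSet_Ioo
  rw [complex_eq_ofReal hx]; simp

lemma beta_value (s t : ℝ) (hs : 0 < s) (ht : 0 < t) :
    ∫ x in Set.Ioo (0:ℝ) 1, x ^ (s - 1) * (1 - x) ^ (t - 1)
      = Real.Gamma s * Real.Gamma t / Real.Gamma (s + t) := by
  have hG : Real.Gamma (s + t) ≠ 0 := (Real.Gamma_pos_of_pos (by linarith)).ne'
  have key := Complex.Gamma_mul_Gamma_eq_betaIntegral (s := (s:ℂ)) (t := (t:ℂ))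
    (by simpa) (by simpa)
  have hbeta : Complex.betaIntegral (s:ℂ) (t:ℂ)
      = ((∫ x in Set.Ioo (0:ℝ) 1, x ^ (s - 1) * (1 - x) ^ (t - 1) : ℝ) : ℂ) := by
    rw [Complex.betaIntegral, intervalIntegral.integral_of_le (by norm_num : (0:ℝ) ≤ 1),
      ← MeasureTheory.integral_Ioc_eq_integral_Ioo (f := fun x : ℝ =>
        x ^ (s - 1) * (1 - x) ^ (t - 1))]
    rw [show (∫ x in Set.Ioc (0:ℝ) 1, (x : ℂ) ^ ((s:ℂ) - 1) * (1 - (x : ℂ)) ^ ((t:ℂ) - 1))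
        = ∫ x in Set.Ioo (0:ℝ) 1, (x : ℂ) ^ ((s:ℂ) - 1) * (1 - (x : ℂ)) ^ ((t:ℂ) - 1) from
        MeasureTheory.integral_Ioc_eq_integral_Ioo]
    rw [MeasureTheory.setIntegral_congr_fun measurableSet_Ioo (fun x hx => complex_eq_ofReal hx),
      MeasureTheory.integral_Ioc_eq_integral_Ioo]
    exact integral_ofReal
  rw [hbeta, Complex.Gamma_ofReal, Complex.Gamma_ofReal,
    show ((s:ℂ) + t) = ((s + t : ℝ) : ℂ) by push_cast; ring, Complex.Gamma_ofReal] at key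
  norm_cast at key
  field_simp
  linarith [key]
section
variable (a b : ℝ)

lemma subst_main (ha : 0 < a) (hb : b < 1) :
    IntegrableOn (fun t : ℝ => t ^ (a-1) * (1+t) ^ (b-a-1)) (Set.Ioi 0) ∧
    ∫ t in Set.Ioi (0:ℝ), t ^ (a-1) * (1+t) ^ (b-a-1)
      = ∫ u in Set.Ioo (0:ℝ) 1, u ^ (a-1) * (1-u) ^ ((1-b)-1) := by
  set f : ℝ → ℝ := fun u => u / (1 - u) with hf
  set f' : ℝ → ℝ := fun u => 1 / (1 - u) ^ 2 with hf'
  have hderiv : ∀ u ∈ Set.Ioo (0:ℝ) 1, HasDerivWithinAt f (f' u) (Set.Ioo 0 1) u := by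
    intro u hu
    have h1 : (1:ℝ) - u ≠ 0 := by have := hu.2; intro h; nlinarith [hu.2]
    have H := (hasDerivAt_id u).div ((hasDerivAt_const u 1).sub (hasDerivAt_id u)) h1
    simp only [id_eq, Pi.sub_apply] at H
    have e : (1 * (1 - u) - u * (0 - 1)) = 1 := by ring
    rw [e] at H
    exact H.hasDerivWithinAt
  have hinj : Set.InjOn f (Set.Ioo 0 1) := by
    intro u hu v hv h
    have h1 : (0:ℝ) < 1 - u := by linarith [hu.2]
    have h2 : (0:ℝ) < 1 - v := by linarith [hv.2]
    simp only [hf, div_eq_div_iff h1.ne' h2.ne'] at h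
    nlinarith [h]
  have himg : f '' Set.Ioo 0 1 = Set.Ioi (0:ℝ) := by
    ext y
    constructor
    · rintro ⟨u, hu, rfl⟩
      have h1 : (0:ℝ) < 1 - u := by linarith [hu.2]
      exact div_pos hu.1 h1
    · intro hy
      have hy' : (0:ℝ) < y := hy
      refine ⟨y / (1 + y), ⟨div_pos hy' (by linarith), ?_⟩, ?_⟩
      · rw [div_lt_one (by linarith)]; linarith
      · simp only [hf]
        rw [show 1 - y / (1 + y) = 1 / (1 + y) by field_simp; ring]
        field_simp
  have hpt : ∀ u ∈ Set.Ioo (0:ℝ) 1,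
      |f' u| • ((f u) ^ (a-1) * (1 + f u) ^ (b-a-1)) = u ^ (a-1) * (1-u) ^ ((1-b)-1) := by
    intro u hu
    have h0 : 0 < u := hu.1
    have h1 : (0:ℝ) < 1 - u := by linarith [hu.2]
    have e1 : 1 + f u = (1 - u)⁻¹ := by simp only [hf]; field_simp; ring
    rw [e1]
    simp only [hf, hf', smul_eq_mul]
    have A : (1-u)⁻¹ ^ (b-a-1) = (1-u) ^ (a+1-b) := by
      rw [← Real.rpow_neg_one (1-u), ← Real.rpow_mul h1.le,
        show (-1) * (b-a-1) = a+1-b by ring]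
    have B : u ^ (a-1) / (1-u) ^ (a-1) = u ^ (a-1) * (1-u) ^ (1-a) := by
      rw [div_eq_mul_inv, ← Real.rpow_neg h1.le, show -(a-1) = 1-a by ring]
    have C : (1:ℝ) / (1-u) ^ 2 = (1-u) ^ (-2:ℝ) := by
      rw [Real.rpow_neg h1.le, ← Real.rpow_natCast (1-u) 2]
      norm_num
    rw [abs_of_pos (by positivity), Real.div_rpow h0.le h1.le, A, B, C]
    calc (1-u) ^ (-2:ℝ) * (u ^ (a-1) * (1-u) ^ (1-a) * (1-u) ^ (a+1-b))
        = u ^ (a-1) * ((1-u) ^ (-2:ℝ) * (1-u) ^ (1-a) * (1-u) ^ (a+1-b)) := by ring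
      _ = u ^ (a-1) * (1-u) ^ ((1-b)-1) := by
          rw [← Real.rpow_add h1, ← Real.rpow_add h1]
          congr 1
          ring
  have key := integral_image_eq_integral_abs_deriv_smul measurableSet_Ioo hderiv hinj
    (fun t => t ^ (a-1) * (1+t) ^ (b-a-1))
  have keyi := integrableOn_image_iff_integrableOn_abs_deriv_smul measurableSet_Ioo hderiv hinj
    (fun t => t ^ (a-1) * (1+t) ^ (b-a-1))
  rw [himg] at key keyi
  constructor
  · rw [keyi]
    refine MeasureTheory.IntegrableOn.congr_fun ?_ (fun u hu => (hpt u hu).symm)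
      measurableSet_Ioo
    exact beta_integrable a (1-b) ha (by linarith)
  · rw [key, MeasureTheory.setIntegral_congr_fun measurableSet_Ioo hpt]

end

lemma integral_tendsto_aux (a b : ℝ) (ha : 0 < a) (hb : b < 1) :
    Tendsto (fun x : ℝ => ∫ t in Set.Ioi (0:ℝ),
        Real.exp (-x * t) * t ^ (a-1) * (1+t) ^ (b-a-1)) (𝓝[>] 0)
      (𝓝 (∫ t in Set.Ioi (0:ℝ), t ^ (a-1) * (1+t) ^ (b-a-1))) := by
  obtain ⟨hint, -⟩ := subst_main a b ha hb
  refine tendsto_integral_filter_of_dominated_convergence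
    (fun t => t ^ (a-1) * (1+t) ^ (b-a-1)) ?_ ?_ hint ?_
  · filter_upwards with x
    apply Measurable.aestronglyMeasurable
    fun_prop
  · filter_upwards [self_mem_nhdsWithin] with x (hx : 0 < x)
    rw [ae_restrict_iff' measurableSet_Ioi]
    filter_upwards with t ht
    have ht' : (0:ℝ) < t := ht
    have h1 : (0:ℝ) < 1 + t := by linarith
    have he : Real.exp (-x * t) ≤ 1 := by
      rw [← Real.exp_zero]
      apply Real.exp_le_exp.mpr
      nlinarith
    rw [Real.norm_eq_abs, abs_of_nonneg (by positivity)]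
    calc Real.exp (-x * t) * t ^ (a-1) * (1+t) ^ (b-a-1)
        ≤ 1 * t ^ (a-1) * (1+t) ^ (b-a-1) := by
          apply mul_le_mul_of_nonneg_right (mul_le_mul_of_nonneg_right he (by positivity))
          positivity
      _ = t ^ (a-1) * (1+t) ^ (b-a-1) := by ring
  · rw [ae_restrict_iff' measurableSet_Ioi]
    filter_upwards with t
    intro ht
    have cont : Continuous fun x : ℝ => Real.exp (-x * t) * t ^ (a-1) * (1+t) ^ (b-a-1) := by
      fun_prop
    have h := (cont.tendsto 0).mono_left (nhdsWithin_le_nhds (s := Set.Ioi (0:ℝ)))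
    simpa using h

end AuxTricomi

/-- Tricomi's confluent hypergeometric function of the second kind, defined for `a > 0`
and `x > 0` by its Laplace transform integral representation. -/
noncomputable def tricomiU (a b x : ℝ) : ℝ :=
  (1 / Real.Gamma a) * ∫ t in Set.Ioi (0 : ℝ), Real.exp (-x * t) * t ^ (a - 1) * (1 + t) ^ (b - a - 1)

theorem tricomiU_limit_zero (a b : ℝ) (ha : 0 < a) (hb : b < 1) (hab : 0 < a - b + 1) :
    Tendsto (fun x : ℝ => tricomiU a b x) (𝓝[>] 0)
      (𝓝 (Real.Gamma (1 - b) / Real.Gamma (a - b + 1))) := by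
  have hGa : Real.Gamma a ≠ 0 := (Real.Gamma_pos_of_pos ha).ne'
  have hval : ∫ t in Set.Ioi (0:ℝ), t ^ (a-1) * (1+t) ^ (b-a-1)
      = Real.Gamma a * Real.Gamma (1-b) / Real.Gamma (a-b+1) := by
    rw [(subst_main a b ha hb).2, beta_value a (1-b) ha (by linarith),
      show a + (1-b) = a-b+1 by ring]
  have h1 := (integral_tendsto_aux a b ha hb).const_mul (1 / Real.Gamma a)
  rw [hval] at h1
  have h2 : (1 / Real.Gamma a) * (Real.Gamma a * Real.Gamma (1-b) / Real.Gamma (a-b+1))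
      = Real.Gamma (1-b) / Real.Gamma (a-b+1) := by
    field_simp
  rw [h2] at h1
  exact h1
end

section
/- Let Z = XY where (X,Y) is bivariate normal with means (μ_X, μ_Y), unit variances, and correlation ρ ∈ (-1,1). Then the characteristic function of Z is φ_Z(t) = ([1-(1+ρ)it][1+(1-ρ)it])^{-1/2} · exp( (-(μ_X²+μ_Y²-2ρμ_Xμ_Y)t² + 2μ_Xμ_Y it) / (2[1-(1+ρ)it][1+(1-ρ)it]) ) for all real t, where the square root is the principal branch. -/
open MeasureTheory ProbabilityTheory Complex Real
open scoped NNReal ENNReal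

lemma aux_sq_eq {a b : ℂ} (h : a ^ 2 = b ^ 2) (ha : 0 < a.re) (hb : 0 < b.re) : a = b := by
  have h2 : (a - b) * (a + b) = 0 := by linear_combination h
  rcases mul_eq_zero.1 h2 with h' | h'
  · exact sub_eq_zero.1 h'
  · exfalso
    have h3 : a.re + b.re = 0 := by
      have := congrArg Complex.re h'
      simpa using this
    linarith

lemma re_cpow_half_pos {z : ℂ} (hz : 0 < z.re) : 0 < (z ^ (1/2 : ℂ)).re := by
  have hz0 : z ≠ 0 := by intro h; rw [h] at hz; simp at hz
  rw [Complex.cpow_def_of_ne_zero hz0, Complex.exp_re]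
  apply mul_pos (Real.exp_pos _)
  apply Real.cos_pos_of_mem_Ioo
  have harg : |z.arg| < π/2 := Complex.abs_arg_lt_pi_div_two_iff.2 (Or.inl hz)
  have harg' := abs_lt.1 harg
  have him : (Complex.log z * (1/2 : ℂ)).im = z.arg / 2 := by
    simp [Complex.mul_im, Complex.log_im]
    ring
  rw [him]
  rw [Set.mem_Ioo]; constructor <;> linarith [Real.pi_pos]

lemma sq_cpow_half (z : ℂ) : (z ^ (1/2 : ℂ)) ^ 2 = z := by
  rw [← Complex.cpow_mul_nat z (1/2) 2]
  norm_num

lemma pdf01 (x : ℝ) : gaussianPDFReal 0 1 x = (Real.sqrt (2*π))⁻¹ * Real.exp (-x^2/2) := by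
  simp [gaussianPDFReal]

lemma int_gauss (g : ℝ → ℂ) :
    ∫ x, g x ∂(gaussianReal 0 1)
      = (Real.sqrt (2*π) : ℂ)⁻¹ * ∫ x : ℝ, Complex.exp (-(x:ℂ)^2/2) * g x := by
  rw [gaussianReal_of_var_ne_zero _ one_ne_zero]
  rw [show gaussianPDF 0 1 = (fun x => ((Real.toNNReal (gaussianPDFReal 0 1 x) : ℝ≥0) : ℝ≥0∞)) from rfl]
  rw [integral_withDensity_eq_integral_smul ((measurable_gaussianPDFReal 0 1).real_toNNReal) g]
  rw [← integral_const_mul]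
  congr 1; funext x
  rw [NNReal.smul_def, Real.coe_toNNReal _ (gaussianPDFReal_nonneg 0 1 x), pdf01, Complex.real_smul]
  push_cast [Complex.ofReal_exp]
  ring

lemma cpow_half_factor {P : ℂ} (hP : 0 < P.re) :
    ((Real.sqrt (2*π) : ℝ) : ℂ)⁻¹ * ((((2*π : ℝ)):ℂ) / P) ^ (1/2 : ℂ) = (P ^ (1/2 : ℂ))⁻¹ := by
  have hP0 : P ≠ 0 := fun h => by simp [h] at hP
  have h2π : (0:ℝ) < 2*π := by positivity
  have hwre : 0 < ((((2*π:ℝ)):ℂ) / P).re := by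
    rw [div_eq_mul_inv, Complex.re_ofReal_mul, Complex.inv_re]
    exact mul_pos h2π (div_pos hP (Complex.normSq_pos.2 hP0))
  have hcne : P ^ (1/2 : ℂ) ≠ 0 := by
    simp [Complex.cpow_eq_zero_iff, hP0]
  apply aux_sq_eq
  · rw [mul_pow, sq_cpow_half, inv_pow, ← Complex.ofReal_pow,
      Real.sq_sqrt h2π.le, inv_pow, sq_cpow_half]
    field_simp
  · rw [← Complex.ofReal_inv, Complex.re_ofReal_mul]
    have := re_cpow_half_pos hwre
    positivity
  · rw [Complex.inv_re]
    have h1 := re_cpow_half_pos hP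
    have h2 := Complex.normSq_pos.2 hcne
    positivity

theorem charFun_product_bivariate_normal (μX μY ρ : ℝ) (hρ : ρ ∈ Set.Ioo (-1 : ℝ) 1)
    (t : ℝ) :
    (∫ p : ℝ × ℝ, Complex.exp (I * t *
        (((μX + p.1) * (μY + ρ * p.1 + Real.sqrt (1 - ρ ^ 2) * p.2) : ℝ) : ℂ))
      ∂((gaussianReal 0 1).prod (gaussianReal 0 1)))
    = ((1 - (1 + (ρ : ℂ)) * I * t) * (1 + (1 - (ρ : ℂ)) * I * t)) ^ (-(1 : ℂ) / 2) *
      Complex.exp ((-((μX ^ 2 + μY ^ 2 - 2 * ρ * μX * μY : ℝ) : ℂ) * t ^ 2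
          + 2 * (μX : ℂ) * μY * I * t) /
        (2 * ((1 - (1 + (ρ : ℂ)) * I * t) * (1 + (1 - (ρ : ℂ)) * I * t)))) := by
  obtain ⟨hr1, hr2⟩ := hρ
  have hρ2 : (0:ℝ) < 1 - ρ^2 := by nlinarith
  set s : ℝ := Real.sqrt (1 - ρ ^ 2) with hs
  have hs2 : s^2 = 1 - ρ^2 := Real.sq_sqrt hρ2.le
  have hs2' : (s:ℂ)^2 = 1 - (ρ:ℂ)^2 := by
    rw [← Complex.ofReal_pow, hs2]; push_cast; ring
  set P : ℂ := (1 - (1 + (ρ : ℂ)) * I * t) * (1 + (1 - (ρ : ℂ)) * I * t) with hPdef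
  have hPalt : P = Complex.ofReal (1 + (1-ρ^2)*t^2) - (Complex.ofReal (2*ρ*t)) * I := by
    rw [hPdef]; push_cast
    linear_combination (-(1-(ρ:ℂ)^2)*(t:ℂ)^2) * Complex.I_sq
  have hPre : 0 < P.re := by
    rw [hPalt]
    simp [← Complex.ofReal_pow]
    nlinarith [sq_nonneg t, sq_nonneg (ρ*t)]
  have hP0 : P ≠ 0 := fun h => by simp [h] at hPre
  -- Fubini
  have hcont : Continuous (fun p : ℝ × ℝ => Complex.exp (I * t *
      (((μX + p.1) * (μY + ρ * p.1 + s * p.2) : ℝ) : ℂ))) := by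
    fun_prop
  have hint : Integrable (fun p : ℝ × ℝ => Complex.exp (I * t *
      (((μX + p.1) * (μY + ρ * p.1 + s * p.2) : ℝ) : ℂ)))
      ((gaussianReal 0 1).prod (gaussianReal 0 1)) := by
    refine Integrable.mono' (integrable_const 1) hcont.aestronglyMeasurable
      (ae_of_all _ fun p => ?_)
    rw [Complex.norm_exp]
    norm_num [Complex.mul_re, Complex.mul_im]
  rw [MeasureTheory.integral_prod _ hint]
  -- inner integral
  have inner : ∀ ξ : ℝ, (∫ η : ℝ, Complex.exp (I * t *
        (((μX + ξ) * (μY + ρ * ξ + s * η) : ℝ) : ℂ)) ∂(gaussianReal 0 1))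
      = Complex.exp (I*(t:ℂ)*((μX:ℂ)+ξ)*((μY:ℂ)+(ρ:ℂ)*ξ)
          - (1-(ρ:ℂ)^2)*(t:ℂ)^2*((μX:ℂ)+ξ)^2/2) := by
    intro ξ
    rw [int_gauss]
    have hpt : ∀ η : ℝ, Complex.exp (-(η:ℂ)^2/2) * Complex.exp (I * t *
          (((μX + ξ) * (μY + ρ * ξ + s * η) : ℝ) : ℂ))
        = Complex.exp ((-(1:ℂ)/2) * (η:ℂ)^2 + (I*(t:ℂ)*((μX:ℂ)+ξ)*(s:ℂ)) * (η:ℂ)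
            + (I*(t:ℂ)*((μX:ℂ)+ξ)*((μY:ℂ)+(ρ:ℂ)*ξ))) := by
      intro η; rw [← Complex.exp_add]; congr 1; push_cast; ring
    simp_rw [hpt]
    rw [integral_cexp_quadratic (by norm_num : ((-(1:ℂ)/2)).re < 0)]
    rw [show ((π:ℂ) / -(-(1:ℂ)/2)) = (((2*π:ℝ)):ℂ) by push_cast; ring]
    rw [show ((((2*π:ℝ)):ℂ)) ^ (1/2 : ℂ) = ((Real.sqrt (2*π) : ℝ) : ℂ) by
      rw [Real.sqrt_eq_rpow, Complex.ofReal_cpow (by positivity)]; norm_num]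
    rw [← mul_assoc, inv_mul_cancel₀ (by
      exact_mod_cast Real.sqrt_ne_zero'.2 (by positivity) : ((Real.sqrt (2*π):ℝ):ℂ) ≠ 0), one_mul]
    congr 1
    linear_combination (I^2*(t:ℂ)^2*((μX:ℂ)+ξ)^2/2) * hs2'
      + ((1-(ρ:ℂ)^2)*(t:ℂ)^2*((μX:ℂ)+ξ)^2/2) * Complex.I_sq
  simp_rw [inner]
  -- outer integral
  rw [int_gauss]
  set B : ℂ := I*(t:ℂ)*(ρ:ℂ) - (1-(ρ:ℂ)^2)*(t:ℂ)^2/2 - 1/2 with hB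
  set C : ℂ := I*(t:ℂ)*((μY:ℂ)+(ρ:ℂ)*(μX:ℂ)) - (1-(ρ:ℂ)^2)*(t:ℂ)^2*(μX:ℂ) with hC
  set D : ℂ := I*(t:ℂ)*(μX:ℂ)*(μY:ℂ) - (1-(ρ:ℂ)^2)*(t:ℂ)^2*(μX:ℂ)^2/2 with hD
  have hpt2 : ∀ ξ : ℝ, Complex.exp (-(ξ:ℂ)^2/2) * Complex.exp (I*(t:ℂ)*((μX:ℂ)+ξ)*((μY:ℂ)+(ρ:ℂ)*ξ)
        - (1-(ρ:ℂ)^2)*(t:ℂ)^2*((μX:ℂ)+ξ)^2/2)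
      = Complex.exp (B * (ξ:ℂ)^2 + C * (ξ:ℂ) + D) := by
    intro ξ; rw [← Complex.exp_add]; congr 1; rw [hB, hC, hD]; ring
  simp_rw [hpt2]
  have hBre : B.re < 0 := by
    have hBalt : B = Complex.ofReal (-(1-ρ^2)*t^2/2 - 1/2) + Complex.ofReal (t*ρ) * I := by
      rw [hB]; push_cast; ring
    rw [hBalt]
    simp [← Complex.ofReal_pow]
    nlinarith [sq_nonneg t, sq_nonneg (ρ*t)]
  rw [integral_cexp_quadratic hBre C D]
  have hBP : -B = P/2 := by
    rw [hB, hPdef]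
    linear_combination ((1-(ρ:ℂ)^2)*(t:ℂ)^2/2) * Complex.I_sq
  have hw : ((π:ℂ) / -B) = (((2*π : ℝ)):ℂ) / P := by
    rw [hBP, div_div_eq_mul_div]; push_cast; ring
  rw [hw, ← mul_assoc, show (-(1:ℂ)/2) = -(1/2 : ℂ) by norm_num, Complex.cpow_neg,
    cpow_half_factor hPre]
  congr 1
  have h4B : (4:ℂ) * B = -(2*P) := by linear_combination (-4 : ℂ) * hBP
  rw [h4B, div_neg, sub_neg_eq_add]
  congr 1
  have h2P : (2:ℂ) * P ≠ 0 := by simp [hP0]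
  have key : D * (2*P) + C^2 = (-((μX ^ 2 + μY ^ 2 - 2 * ρ * μX * μY : ℝ) : ℂ) * (t:ℂ) ^ 2
      + 2 * (μX : ℂ) * μY * I * t) := by
    rw [hC, hD, hPdef]; push_cast
    linear_combination ((-4*(ρ:ℂ)*(t:ℂ)^2*(μX:ℂ)*(μY:ℂ)) - 2*(1-(ρ:ℂ)^2)*(t:ℂ)^3*(μX:ℂ)*(μY:ℂ)*I
      + (1-(ρ:ℂ)^2)^2*(t:ℂ)^4*(μX:ℂ)^2 + (t:ℂ)^2*((μY:ℂ)+(ρ:ℂ)*(μX:ℂ))^2) * Complex.I_sq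
  calc D + C^2/(2*P) = (D * (2*P) + C^2)/(2*P) := by field_simp
    _ = _ := by rw [key]
end
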